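/- Let d > 2 be an integer, set 2* = 2d/(d−2), and let a, c be real numbers with c > 2 and a ≥ c·d/(c−2); let a', c' > 1 be the conjugate exponents defined by 1/a + 1/a' = 1 and 1/c + 1/c' = 1. Then there exist real numbers P, Q > 1, M > c', and β, κ with 0 < β < 1 and 0 < κ < 1 such that the following hold simultaneously: 1/M = β/P; 1/a' = 1 − β + β/Q; 1/Q = 1 − κ + 2κ/2*; and κ·P ≤ 1. -/

import Mathlib

/-- Lemma 4.9: given `c > 2`, `a ≥ c d / (c - 2)` and the conjugate exponents
`a', c' > 1`, there exist `P, Q > 1`, `M > c'` and `0 < β, κ < 1` satisfying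
`1/M = β/P`, `1/a' = 1 - β + β/Q`, `1/Q = 1 - κ + 2κ/2*` with
`2* = 2d/(d-2)`, and `κ P ≤ 1`. -/
theorem exists_exponents_self_absorption
    (d : ℕ) (hd : 2 < d) (a c a' c' : ℝ)
    (hc : 2 < c) (ha : a ≥ c * d / (c - 2))
    (ha' : 1 < a') (hc' : 1 < c')
    (haa' : 1 / a + 1 / a' = 1) (hcc' : 1 / c + 1 / c' = 1) :
    ∃ P Q M β κ : ℝ, 1 < P ∧ 1 < Q ∧ c' < M ∧
      0 < β ∧ β < 1 ∧ 0 < κ ∧ κ < 1 ∧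
      1 / M = β / P ∧
      1 / a' = 1 - β + β / Q ∧
      1 / Q = 1 - κ + 2 * κ / (2 * (d : ℝ) / ((d : ℝ) - 2)) ∧
      κ * P ≤ 1 := by
  have hd2 : (2:ℝ) < (d:ℝ) := by exact_mod_cast hd
  have hdpos : (0:ℝ) < d := by linarith
  have hc2 : (0:ℝ) < c - 2 := by linarith
  have hcpos : (0:ℝ) < c := by linarith
  have hacd : a * (c - 2) ≥ c * d := by
    rw [ge_iff_le, div_le_iff₀ hc2] at ha; linarith
  have hapos : 0 < a := by nlinarith
  have h2a : (d:ℝ) < 2 * a := by nlinarith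
  set t : ℝ := d / (2 * a) with htdef
  have ht0 : 0 < t := by positivity
  have ht1 : t < 1 := by
    rw [htdef, div_lt_one (by linarith)]; linarith
  have hta : t * (2 * a) = d := div_mul_cancel₀ _ (by linarith)
  have ht1pos : 0 < t + 1 := by linarith
  have ht1ne : t + 1 ≠ 0 := ne_of_gt ht1pos
  have hdt : 0 < (d:ℝ) - (t + 1) := by linarith
  have hdtne : (d:ℝ) - (t + 1) ≠ 0 := ne_of_gt hdt
  have hdne : (d:ℝ) ≠ 0 := ne_of_gt hdpos
  have hd2ne : (d:ℝ) - 2 ≠ 0 := by intro h; linarith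
  have h1a : 1 / a = 2 * t / d := by
    rw [htdef]; field_simp
  have h1a' : 1 / a' = 1 - 2 * t / d := by
    rw [← h1a]; linarith
  refine ⟨2 / (t + 1), d / (d - (t + 1)), 2 * a / d, 2 * t / (t + 1), (t + 1) / 2,
    ?_, ?_, ?_, ?_, ?_, ?_, ?_, ?_, ?_, ?_, ?_⟩
  · rw [lt_div_iff₀ ht1pos]; linarith
  · rw [lt_div_iff₀ hdt]; linarith
  · rw [lt_div_iff₀ hdpos]
    have hcc : c' * (c - 1) = c := by
      have hc'pos : (0:ℝ) < c' := by linarith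
      field_simp at hcc'
      linarith
    nlinarith [mul_pos hapos hcpos]
  · positivity
  · rw [div_lt_one ht1pos]; linarith
  · positivity
  · linarith
  · have h : 2 * t / (t + 1) / (2 / (t + 1)) = t := by
      field_simp
    rw [one_div_div, h]
  · rw [h1a']
    field_simp
    ring
  · rw [one_div_div]
    field_simp
    ring
  · have h : (t + 1) / 2 * (2 / (t + 1)) = 1 := by
      field_simp
    rw [h]
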